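/- For density matrices σ₁ positive definite and σ₂, and any density matrix ρ with (1/2)‖σ₁ − σ₂‖₁ ≤ δ, one has Tr(ρ (log σ₂ − log σ₁)) ≤ log(1 + δ / λ_min(σ₁)), where λ_min(σ₁) is the minimum eigenvalue of σ₁ (and σ₂ is assumed positive definite so log σ₂ is defined). -/

import Mathlib

open Matrix BigOperators
open scoped ComplexOrder

noncomputable section

/-- `η(x) = -x log x` (with `log 0 = 0` convention). -/
def eta (x : ℝ) : ℝ := -(x * Real.log x)

/-- Shannon entropy of a (non-negative) vector. -/
def shannonH {n : ℕ} (p : Fin n → ℝ) : ℝ := ∑ i, eta (p i)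

/-- Binary entropy `h(ε) = -ε log ε - (1-ε) log(1-ε)`. -/
def binEnt (x : ℝ) : ℝ := -(x * Real.log x) - ((1 - x) * Real.log (1 - x))

/-- Eigenvalues of a Hermitian matrix in non-decreasing order. -/
def eigUp {d : ℕ} (A : Matrix (Fin d) (Fin d) ℂ) (hA : A.IsHermitian) : Fin d → ℝ :=
  hA.eigenvalues ∘ Tuple.sort hA.eigenvalues

/-- Eigenvalues of a Hermitian matrix in non-increasing order. -/
def eigDown {d : ℕ} (A : Matrix (Fin d) (Fin d) ℂ) (hA : A.IsHermitian) : Fin d → ℝ :=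
  fun i => eigUp A hA i.rev

/-- Entries of a vector rearranged in non-increasing order. -/
def sortDown {n : ℕ} (x : Fin n → ℝ) : Fin n → ℝ :=
  fun i => (x ∘ Tuple.sort x) i.rev

/-- `Majorizes y x` : the vector `x` is majorized by the vector `y`. -/
def Majorizes {n : ℕ} (y x : Fin n → ℝ) : Prop :=
  (∀ k : ℕ, ∑ j ∈ Finset.univ.filter (fun j : Fin n => (j : ℕ) < k), sortDown x j ≤
            ∑ j ∈ Finset.univ.filter (fun j : Fin n => (j : ℕ) < k), sortDown y j) ∧
  ∑ j, x j = ∑ j, y j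

/-- Von Neumann entropy `S(A) = -Tr(A log A)` expressed via eigenvalues. -/
def vnEntropy {n : Type*} [Fintype n] [DecidableEq n] (A : Matrix n n ℂ) : ℝ :=
  if hA : A.IsHermitian then ∑ i, eta (hA.eigenvalues i) else 0

/-- Trace norm of a Hermitian matrix: sum of absolute values of eigenvalues. -/
def traceNorm {n : Type*} [Fintype n] [DecidableEq n] (A : Matrix n n ℂ) : ℝ :=
  if hA : A.IsHermitian then ∑ i, |hA.eigenvalues i| else 0

/-- A density matrix: positive semi-definite with unit trace. -/
def IsDensity {n : Type*} [Fintype n] [DecidableEq n] (ρ : Matrix n n ℂ) : Prop :=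
  ρ.PosSemidef ∧ ρ.trace = 1

/-- Matrix logarithm via the spectral decomposition (with `log 0 = 0` convention). -/
def mlog {n : Type*} [Fintype n] [DecidableEq n] (A : Matrix n n ℂ) : Matrix n n ℂ :=
  if hA : A.IsHermitian then
    (hA.eigenvectorUnitary : Matrix n n ℂ)
      * Matrix.diagonal (fun i => (Real.log (hA.eigenvalues i) : ℂ))
      * (star (hA.eigenvectorUnitary : Matrix n n ℂ))
  else 0

/-- Umegaki relative entropy `D(ρ‖σ) = Tr(ρ (log ρ - log σ))`. -/
def relEnt {n : Type*} [Fintype n] [DecidableEq n] (ρ σ : Matrix n n ℂ) : ℝ :=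
  ((ρ * (mlog ρ - mlog σ)).trace).re

/-- Max-relative entropy `D_max(ρ‖σ) = inf {λ > 0 : ρ ≤ e^λ σ}`. -/
def dMax {n : Type*} [Fintype n] [DecidableEq n] (ρ σ : Matrix n n ℂ) : ℝ :=
  sInf {l : ℝ | 0 < l ∧ (Real.exp l • σ - ρ).PosSemidef}

/-- Partial trace over the first tensor factor. -/
def ptraceA {dA dB : ℕ} (ρ : Matrix (Fin dA × Fin dB) (Fin dA × Fin dB) ℂ) :
    Matrix (Fin dB) (Fin dB) ℂ :=
  Matrix.of fun i j => ∑ a, ρ (a, i) (a, j)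

/-- Conditional entropy `S(A|B)_ρ = S(ρ_{AB}) - S(ρ_B)`. -/
def condEnt {dA dB : ℕ} (ρ : Matrix (Fin dA × Fin dB) (Fin dA × Fin dB) ℂ) : ℝ :=
  vnEntropy ρ - vnEntropy (ptraceA ρ)

section Helpers19
open MeasureTheory Set Filter
open scoped Topology

open MeasureTheory Set Filter
open scoped Topology

lemma tendsto_F (x : ℝ) (hx : 0 < x) :
    Tendsto (fun t => Real.log (1+t) - Real.log (x+t)) atTop (𝓝 0) := by
  have h1 : Tendsto (fun t : ℝ => 1 - (x-1) * (x+t)⁻¹) atTop (𝓝 1) := by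
    have : Tendsto (fun t : ℝ => (x+t)⁻¹) atTop (𝓝 0) :=
      (tendsto_atTop_add_const_left _ x tendsto_id).inv_tendsto_atTop
    simpa using tendsto_const_nhds.sub (this.const_mul (x-1))
  have h2 : Tendsto (fun t : ℝ => Real.log (1 - (x-1) * (x+t)⁻¹)) atTop (𝓝 0) := by
    have := (Real.continuousAt_log (by norm_num : (1:ℝ) ≠ 0)).tendsto.comp h1
    simpa [Function.comp_def] using this
  refine Tendsto.congr' ?_ h2
  filter_upwards [eventually_gt_atTop 0] with t ht
  have hxt : 0 < x + t := by linarith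
  have h1t : 0 < 1 + t := by linarith
  have h : 1 - (x-1) * (x+t)⁻¹ = (1+t)/(x+t) := by field_simp; ring
  rw [h, Real.log_div (by positivity) (by positivity)]

lemma hasDeriv_F (x : ℝ) (hx : 0 < x) (t : ℝ) (ht : t ∈ Ici (0:ℝ)) :
    HasDerivAt (fun t => Real.log (1+t) - Real.log (x+t)) ((1+t)⁻¹ - (x+t)⁻¹) t := by
  have ht' : (0:ℝ) ≤ t := ht
  have h1 : HasDerivAt (fun t : ℝ => Real.log (1+t)) (1+t)⁻¹ t := by
    have := (Real.hasDerivAt_log (by linarith : 1 + t ≠ 0)).comp t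
      ((hasDerivAt_id t).const_add 1)
    simpa [Function.comp_def] using this
  have h2 : HasDerivAt (fun t : ℝ => Real.log (x+t)) (x+t)⁻¹ t := by
    have := (Real.hasDerivAt_log (by linarith : x + t ≠ 0)).comp t
      ((hasDerivAt_id t).const_add x)
    simpa [Function.comp_def] using this
  exact h1.sub h2

lemma integrable_g (x : ℝ) (hx : 0 < x) :
    IntegrableOn (fun t => (1+t)⁻¹ - (x+t)⁻¹) (Ioi (0:ℝ)) := by
  rcases le_or_gt 1 x with h | h
  · exact integrableOn_Ioi_deriv_of_nonneg' (hasDeriv_F x hx)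
      (fun t ht => by
        have ht' : (0:ℝ) < t := ht
        have : (0:ℝ) < 1 + t := by linarith
        have : (0:ℝ) < x + t := by linarith
        have := inv_anti₀ (by linarith : (0:ℝ) < 1 + t) (by linarith : 1 + t ≤ x + t)
        linarith) (tendsto_F x hx)
  · exact integrableOn_Ioi_deriv_of_nonpos' (hasDeriv_F x hx)
      (fun t ht => by
        have ht' : (0:ℝ) < t := ht
        have : (0:ℝ) < x + t := by linarith
        have := inv_anti₀ (by linarith : (0:ℝ) < x + t) (by linarith : x + t ≤ 1 + t)
        linarith) (tendsto_F x hx)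

lemma integral_g (x : ℝ) (hx : 0 < x) :
    ∫ t in Ioi (0:ℝ), ((1+t)⁻¹ - (x+t)⁻¹) = Real.log x := by
  have := integral_Ioi_of_hasDerivAt_of_tendsto' (hasDeriv_F x hx)
    (integrable_g x hx) (tendsto_F x hx)
  simpa using this

noncomputable section
variable {n : Type*} [Fintype n] [DecidableEq n]


lemma contOn (A : Matrix n n ℂ) (f : ℝ → ℝ) : ContinuousOn f (spectrum ℝ A) := by
  rw [continuousOn_iff_continuous_restrict]; fun_prop

lemma mlog_eq_cfc {A : Matrix n n ℂ} (hA : A.IsHermitian) : mlog A = cfc Real.log A := by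
  rw [mlog, dif_pos hA, Matrix.IsHermitian.cfc_eq]
  rfl

lemma quad_cfc {A : Matrix n n ℂ} (hA : A.IsHermitian) (f : ℝ → ℝ) (v : n → ℂ) :
    star v ⬝ᵥ (cfc f A) *ᵥ v =
      ((∑ i, f (hA.eigenvalues i) *
        Complex.normSq ((star (hA.eigenvectorUnitary : Matrix n n ℂ) *ᵥ v) i) : ℝ) : ℂ) := by
  rw [hA.cfc_eq, Matrix.IsHermitian.cfc, Unitary.conjStarAlgAut_apply]
  set U := (hA.eigenvectorUnitary : Matrix n n ℂ)
  set w := star U *ᵥ v with hw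
  have h1 : (U * Matrix.diagonal (RCLike.ofReal ∘ f ∘ hA.eigenvalues) * star U) *ᵥ v
      = U *ᵥ (Matrix.diagonal (RCLike.ofReal ∘ f ∘ hA.eigenvalues) *ᵥ w) := by
    rw [hw, mulVec_mulVec, mulVec_mulVec]
  rw [h1]
  have h2 : star v ⬝ᵥ U *ᵥ (Matrix.diagonal (RCLike.ofReal ∘ f ∘ hA.eigenvalues) *ᵥ w)
      = star w ⬝ᵥ (Matrix.diagonal (RCLike.ofReal ∘ f ∘ hA.eigenvalues) *ᵥ w) := by
    rw [Matrix.dotProduct_mulVec, hw]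
    congr 1
    rw [Matrix.star_mulVec, show (star U)ᴴ = U from by
      rw [Matrix.star_eq_conjTranspose, conjTranspose_conjTranspose]]
  rw [h2]
  simp only [dotProduct, Matrix.mulVec_diagonal, Function.comp_apply]
  push_cast
  refine Finset.sum_congr rfl fun i _ => ?_
  have hc : star (w i) * w i = (Complex.normSq (w i) : ℂ) := by
    rw [Complex.star_def, mul_comm, Complex.mul_conj]
  calc star (w i) * ((f (hA.eigenvalues i) : ℂ) * w i)
      = (f (hA.eigenvalues i) : ℂ) * (star (w i) * w i) := by ring
    _ = _ := by rw [hc]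

-- sum of normSq of w equals that of v
lemma sum_normSq_w {A : Matrix n n ℂ} (hA : A.IsHermitian) (v : n → ℂ) :
    ∑ i, Complex.normSq ((star (hA.eigenvectorUnitary : Matrix n n ℂ) *ᵥ v) i)
      = ∑ i, Complex.normSq (v i) := by
  set U := (hA.eigenvectorUnitary : Matrix n n ℂ)
  set w := star U *ᵥ v with hw
  have key : star w ⬝ᵥ w = star v ⬝ᵥ v := by
    have hU : U * star U = 1 := Unitary.mul_star_self_of_mem hA.eigenvectorUnitary.2
    calc star w ⬝ᵥ w = (star v ᵥ* U) ⬝ᵥ (star U *ᵥ v) := by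
          rw [hw, Matrix.star_mulVec]
          congr 1
          rw [show (star U)ᴴ = U from by
            rw [Matrix.star_eq_conjTranspose, conjTranspose_conjTranspose]]
      _ = ((star v ᵥ* U) ᵥ* star U) ⬝ᵥ v := by rw [Matrix.dotProduct_mulVec]
      _ = (star v ᵥ* (U * star U)) ⬝ᵥ v := by rw [Matrix.vecMul_vecMul]
      _ = star v ⬝ᵥ v := by rw [hU, Matrix.vecMul_one]
  have h1 : (↑(∑ i, Complex.normSq (w i)) : ℂ) = ↑(∑ i, Complex.normSq (v i)) := by
    push_cast
    calc (∑ i, (Complex.normSq (w i) : ℂ)) = star w ⬝ᵥ w := by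
          refine (Finset.sum_congr rfl fun i _ => ?_).symm
          simp [dotProduct, Complex.star_def, mul_comm, Complex.mul_conj]
      _ = star v ⬝ᵥ v := key
      _ = ∑ i, (Complex.normSq (v i) : ℂ) := by
          refine Finset.sum_congr rfl fun i _ => ?_
          simp [dotProduct, Complex.star_def, mul_comm, Complex.mul_conj]
  exact_mod_cast h1

-- PSD of cfc when f nonneg on eigenvalues
lemma cfc_posSemidef {A : Matrix n n ℂ} (hA : A.IsHermitian) (f : ℝ → ℝ)
    (hf : ∀ i, 0 ≤ f (hA.eigenvalues i)) : (cfc f A).PosSemidef := by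
  rw [Matrix.IsHermitian.cfc_eq, Matrix.IsHermitian.cfc]
  have hd : (Matrix.diagonal (RCLike.ofReal ∘ f ∘ hA.eigenvalues) : Matrix n n ℂ).PosSemidef := by
    refine Matrix.PosSemidef.diagonal fun i => ?_
    simpa using Complex.zero_le_real.mpr (hf i)
  simpa [Matrix.star_eq_conjTranspose] using
    hd.mul_mul_conjTranspose_same (hA.eigenvectorUnitary : Matrix n n ℂ)

lemma spectrum_pos {A : Matrix n n ℂ} (hA : A.PosDef) :
    ∀ x ∈ spectrum ℝ A, 0 < x := by
  intro x hx
  rw [hA.isHermitian.spectrum_real_eq_range_eigenvalues] at hx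
  obtain ⟨i, rfl⟩ := hx
  exact hA.eigenvalues_pos i

-- the resolvent
lemma cfc_resolvent {A : Matrix n n ℂ} (hA : A.PosDef) {t : ℝ} (ht : 0 < t) :
    (A + t • 1)⁻¹ = cfc (fun x : ℝ => (x + t)⁻¹) A := by
  have hsa : IsSelfAdjoint A := hA.isHermitian
  have h1 : A + t • 1 = cfc (fun x : ℝ => x + t) A := by
    rw [cfc_add_const t (fun x : ℝ => x) A (contOn A _), cfc_id' ℝ A,
      Algebra.algebraMap_eq_smul_one]
  refine (Matrix.inv_eq_right_inv ?_)
  rw [h1, ← cfc_mul _ _ A (contOn A _) (contOn A _)]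
  have : cfc (fun x : ℝ => (x + t) * (x + t)⁻¹) A = cfc (fun _ : ℝ => (1:ℝ)) A := by
    refine cfc_congr fun x hx => ?_
    have := spectrum_pos hA x hx
    field_simp
  rw [this, cfc_const_one ℝ A]

-- inverse is antitone
lemma inv_antitone {A B : Matrix n n ℂ} (hA : A.PosDef) (hB : B.PosDef)
    (hAB : (B - A).PosSemidef) : (A⁻¹ - B⁻¹).PosSemidef := by
  have hAi := hA.inv
  have hBi := hB.inv
  rw [Matrix.posSemidef_iff_dotProduct_mulVec]
  constructor
  · exact hAi.isHermitian.sub hBi.isHermitian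
  intro v
  set u := B⁻¹ *ᵥ v with hu
  set z := A⁻¹ *ᵥ v with hz
  have hBu : B *ᵥ u = v := by
    rw [hu, Matrix.mulVec_mulVec, Matrix.mul_nonsing_inv _
      (B.isUnit_iff_isUnit_det.mp hB.isUnit), Matrix.one_mulVec]
  have hAz : A *ᵥ z = v := by
    rw [hz, Matrix.mulVec_mulVec, Matrix.mul_nonsing_inv _
      (A.isUnit_iff_isUnit_det.mp hA.isUnit), Matrix.one_mulVec]
  -- Hermitian dot product shuffle: star x ⬝ᵥ M *ᵥ y = star (M *ᵥ x) ⬝ᵥ y for M Hermitian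
  have herm : ∀ (M : Matrix n n ℂ) (_ : M.IsHermitian) (x y : n → ℂ),
      star x ⬝ᵥ M *ᵥ y = star (M *ᵥ x) ⬝ᵥ y := by
    intro M hM x y
    rw [Matrix.star_mulVec, Matrix.dotProduct_mulVec, hM.eq]
  have hsub : (A⁻¹ - B⁻¹) *ᵥ v = A⁻¹ *ᵥ v - B⁻¹ *ᵥ v := by
    rw [Matrix.sub_mulVec]
  rw [hsub, dotProduct_sub, ← hu, ← hz]
  -- key identity
  have key : star v ⬝ᵥ z - star v ⬝ᵥ u
      = star (u - z) ⬝ᵥ A *ᵥ (u - z) + star u ⬝ᵥ (B - A) *ᵥ u := by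
    have e1 : star (u - z) ⬝ᵥ A *ᵥ (u - z)
        = star u ⬝ᵥ A *ᵥ u - star u ⬝ᵥ v - star v ⬝ᵥ u + star v ⬝ᵥ z := by
      rw [Matrix.mulVec_sub, star_sub, sub_dotProduct, dotProduct_sub,
        dotProduct_sub]
      have e11 : star u ⬝ᵥ A *ᵥ z = star u ⬝ᵥ v := by rw [hAz]
      have e12 : star z ⬝ᵥ A *ᵥ u = star v ⬝ᵥ u := by
        rw [herm A hA.isHermitian z u, hAz]
      have e13 : star z ⬝ᵥ A *ᵥ z = star v ⬝ᵥ z := by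
        rw [herm A hA.isHermitian z z, hAz]
      rw [e11, e12, e13]; ring
    have e2 : star u ⬝ᵥ (B - A) *ᵥ u = star v ⬝ᵥ u - star u ⬝ᵥ A *ᵥ u := by
      rw [Matrix.sub_mulVec, dotProduct_sub]
      have : star u ⬝ᵥ B *ᵥ u = star v ⬝ᵥ u := by
        rw [herm B hB.isHermitian u u, hBu]
      rw [this]
    have e3 : star u ⬝ᵥ v = star v ⬝ᵥ u := by
      rw [hu]
      exact (herm B⁻¹ hBi.isHermitian v v).symm
    rw [e1, e2, e3]; ring
  have h1 := hA.posSemidef.dotProduct_mulVec_nonneg (u - z)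
  have h2 := hAB.dotProduct_mulVec_nonneg u
  calc (0:ℂ) ≤ star (u - z) ⬝ᵥ A *ᵥ (u - z) + star u ⬝ᵥ (B - A) *ᵥ u := add_nonneg h1 h2
    _ = star v ⬝ᵥ z - star v ⬝ᵥ u := key.symm

lemma smul_one_psd (t : ℝ) (ht : 0 ≤ t) : ((t • (1 : Matrix n n ℂ))).PosSemidef := by
  have h : t • (1 : Matrix n n ℂ) = Matrix.diagonal (fun _ : n => (t:ℂ)) := by
    ext i j
    by_cases hij : i = j <;>
      simp [hij, Matrix.one_apply, Matrix.diagonal_apply]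
  rw [h]
  exact Matrix.PosSemidef.diagonal fun i => Complex.zero_le_real.mpr ht

lemma shifted_posDef {A : Matrix n n ℂ} (hA : A.PosDef) {t : ℝ} (ht : 0 < t) :
    (A + t • 1).PosDef :=
  hA.add_posSemidef (smul_one_psd t ht.le)

open MeasureTheory in
lemma sum_log_eq {m : Type*} [Fintype m] (lam : m → ℝ) (hl : ∀ i, 0 < lam i) (w : m → ℝ) :
    ∑ i, Real.log (lam i) * w i
      = ∫ t in Set.Ioi (0:ℝ), ∑ i, w i * ((1+t)⁻¹ - (lam i + t)⁻¹) := by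
  have hint : ∀ i : m, IntegrableOn
      (fun t => w i * ((1+t)⁻¹ - (lam i + t)⁻¹)) (Set.Ioi (0:ℝ)) :=
    fun i => (integrable_g _ (hl i)).const_mul (w i)
  rw [integral_finset_sum _ (fun i _ => hint i)]
  refine Finset.sum_congr rfl fun i _ => ?_
  rw [MeasureTheory.integral_const_mul, integral_g _ (hl i)]
  ring

open MeasureTheory in
lemma log_monotone {A B : Matrix n n ℂ} (hA : A.PosDef) (hB : B.PosDef)
    (hAB : (B - A).PosSemidef) : (mlog B - mlog A).PosSemidef := by
  have hmlogA : IsSelfAdjoint (mlog A) := by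
    rw [mlog_eq_cfc hA.isHermitian]; exact cfc_predicate _ _
  have hmlogB : IsSelfAdjoint (mlog B) := by
    rw [mlog_eq_cfc hB.isHermitian]; exact cfc_predicate _ _
  rw [Matrix.posSemidef_iff_dotProduct_mulVec]
  constructor
  · exact hmlogB.sub hmlogA
  intro v
  set lA := hA.isHermitian.eigenvalues with hlA
  set lB := hB.isHermitian.eigenvalues with hlB
  set nA : n → ℝ := fun i => Complex.normSq
    ((star (hA.isHermitian.eigenvectorUnitary : Matrix n n ℂ) *ᵥ v) i) with hnA
  set nB : n → ℝ := fun i => Complex.normSq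
    ((star (hB.isHermitian.eigenvectorUnitary : Matrix n n ℂ) *ᵥ v) i) with hnB
  have hnA0 : ∀ i, 0 ≤ nA i := fun i => Complex.normSq_nonneg _
  have hnB0 : ∀ i, 0 ≤ nB i := fun i => Complex.normSq_nonneg _
  have hSAB : ∑ i, nA i = ∑ i, nB i := by
    rw [hnA, hnB, sum_normSq_w hA.isHermitian v, sum_normSq_w hB.isHermitian v]
  have qA : star v ⬝ᵥ mlog A *ᵥ v = ((∑ i, Real.log (lA i) * nA i : ℝ) : ℂ) := by
    rw [mlog_eq_cfc hA.isHermitian]; exact quad_cfc hA.isHermitian _ v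
  have qB : star v ⬝ᵥ mlog B *ᵥ v = ((∑ i, Real.log (lB i) * nB i : ℝ) : ℂ) := by
    rw [mlog_eq_cfc hB.isHermitian]; exact quad_cfc hB.isHermitian _ v
  -- pointwise resolvent comparison
  have res : ∀ t : ℝ, 0 < t →
      ∑ i, (lB i + t)⁻¹ * nB i ≤ ∑ i, (lA i + t)⁻¹ * nA i := by
    intro t ht
    have hApd := shifted_posDef hA ht
    have hBpd := shifted_posDef hB ht
    have hdiff : (B + t • 1 - (A + t • 1)).PosSemidef := by
      have : B + t • 1 - (A + t • 1) = B - A := by abel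
      rw [this]; exact hAB
    have hpsd := (inv_antitone hApd hBpd hdiff).dotProduct_mulVec_nonneg v
    have hqA : star v ⬝ᵥ (A + t • 1)⁻¹ *ᵥ v
        = ((∑ i, (lA i + t)⁻¹ * nA i : ℝ) : ℂ) := by
      rw [cfc_resolvent hA ht]
      exact quad_cfc hA.isHermitian _ v
    have hqB : star v ⬝ᵥ (B + t • 1)⁻¹ *ᵥ v
        = ((∑ i, (lB i + t)⁻¹ * nB i : ℝ) : ℂ) := by
      rw [cfc_resolvent hB ht]
      exact quad_cfc hB.isHermitian _ v
    rw [Matrix.sub_mulVec, dotProduct_sub, hqA, hqB, ← Complex.ofReal_sub] at hpsd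
    have := Complex.zero_le_real.mp hpsd
    linarith
  -- integral representations
  have hIA := sum_log_eq lA (fun i => hA.eigenvalues_pos i) nA
  have hIB := sum_log_eq lB (fun i => hB.eigenvalues_pos i) nB
  have hintA : IntegrableOn (fun t => ∑ i, nA i * ((1+t)⁻¹ - (lA i + t)⁻¹))
      (Set.Ioi (0:ℝ)) :=
    integrable_finset_sum _ fun i _ => (integrable_g _ (hA.eigenvalues_pos i)).const_mul (nA i)
  have hintB : IntegrableOn (fun t => ∑ i, nB i * ((1+t)⁻¹ - (lB i + t)⁻¹))
      (Set.Ioi (0:ℝ)) :=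
    integrable_finset_sum _ fun i _ => (integrable_g _ (hB.eigenvalues_pos i)).const_mul (nB i)
  have main : ∑ i, Real.log (lA i) * nA i ≤ ∑ i, Real.log (lB i) * nB i := by
    rw [hIA, hIB, ← sub_nonneg, ← MeasureTheory.integral_sub hintB hintA]
    refine MeasureTheory.setIntegral_nonneg measurableSet_Ioi fun t ht => ?_
    have ht' : (0:ℝ) < t := ht
    have h1 : ∀ (l : n → ℝ) (w : n → ℝ),
        ∑ i, w i * ((1+t)⁻¹ - (l i + t)⁻¹)
          = (∑ i, w i) * (1+t)⁻¹ - ∑ i, (l i + t)⁻¹ * w i := by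
      intro l w
      rw [Finset.sum_mul, ← Finset.sum_sub_distrib]
      exact Finset.sum_congr rfl fun i _ => by ring
    have := res t ht'
    simp only [h1]
    rw [hSAB]
    linarith
  rw [Matrix.sub_mulVec, dotProduct_sub, qA, qB, ← Complex.ofReal_sub]
  exact Complex.zero_le_real.mpr (by linarith)

-- trace pairing
open scoped MatrixOrder in
def Matrix.PosSemidef.sqrt {A : Matrix n n ℂ} (_ : A.PosSemidef) : Matrix n n ℂ := CFC.sqrt A

open scoped MatrixOrder in
lemma Matrix.PosSemidef.posSemidef_sqrt {A : Matrix n n ℂ} (hA : A.PosSemidef) :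
    hA.sqrt.PosSemidef := (CFC.sqrt_nonneg A).posSemidef

open scoped MatrixOrder in
lemma Matrix.PosSemidef.sqrt_mul_self {A : Matrix n n ℂ} (hA : A.PosSemidef) :
    hA.sqrt * hA.sqrt = A := CFC.sqrt_mul_sqrt_self A hA.nonneg

lemma trace_pair {rho M : Matrix n n ℂ} (hr : rho.PosSemidef) (hM : M.PosSemidef) :
    0 ≤ ((rho * M).trace).re := by
  have hs := hr.posSemidef_sqrt
  have h1 : rho * M = hr.sqrt * (hr.sqrt * M) := by
    rw [← Matrix.mul_assoc, hr.sqrt_mul_self]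
  have h2 : ((hr.sqrt * (hr.sqrt * M))).trace = ((hr.sqrt * M) * hr.sqrt).trace := by
    rw [Matrix.trace_mul_comm]
  have h3 : (hr.sqrt * M * hr.sqrt).PosSemidef := by
    have := hM.mul_mul_conjTranspose_same hr.sqrt
    rwa [hs.isHermitian.eq] at this
  have h4 : 0 ≤ (hr.sqrt * M * hr.sqrt).trace := by
    rw [Matrix.trace]
    refine Finset.sum_nonneg fun i _ => ?_
    have := h3.dotProduct_mulVec_nonneg (Pi.single i 1)
    simpa [Matrix.mulVec_single, dotProduct, Pi.single_apply, apply_ite (star : ℂ → ℂ),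
      Finset.sum_ite_eq] using this
  have h5 : 0 ≤ ((rho * M).trace) := by
    rw [h1, h2] at *
    exact h4
  simpa using (Complex.le_def.mp h5).1

lemma trace_eq_sum_eig {G : Matrix n n ℂ} (hG : G.IsHermitian) :
    G.trace = ((∑ i, hG.eigenvalues i : ℝ) : ℂ) := by
  conv_lhs => rw [hG.spectral_theorem]
  rw [Unitary.conjStarAlgAut_apply, Matrix.trace_mul_cycle, Unitary.coe_star_mul_self, Matrix.one_mul,
    Matrix.trace_diagonal]
  push_cast
  rfl

lemma shift_psd {G : Matrix n n ℂ} (hG : G.IsHermitian) (d : ℝ)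
    (h : ∀ i, -d ≤ hG.eigenvalues i) : (d • 1 + G).PosSemidef := by
  have hsa : IsSelfAdjoint G := hG
  have h1 : d • (1 : Matrix n n ℂ) + G = cfc (fun x : ℝ => d + x) G := by
    rw [cfc_const_add d (fun x : ℝ => x) G (contOn G _), cfc_id' ℝ G,
      Algebra.algebraMap_eq_smul_one]
  rw [h1]
  exact cfc_posSemidef hG _ fun i => by linarith [h i]

lemma sub_smul_psd {A : Matrix n n ℂ} (hA : A.IsHermitian) (mu : ℝ)
    (h : ∀ i, mu ≤ hA.eigenvalues i) : (A - mu • 1).PosSemidef := by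
  have hsa : IsSelfAdjoint A := hA
  have h1 : A - mu • (1 : Matrix n n ℂ) = cfc (fun x : ℝ => x + (-mu)) A := by
    rw [cfc_add_const (-mu) (fun x : ℝ => x) A (contOn A _), cfc_id' ℝ A,
      Algebra.algebraMap_eq_smul_one, sub_eq_add_neg, neg_smul]
  rw [h1]
  exact cfc_posSemidef hA _ fun i => by linarith [h i]

lemma psd_smul {M : Matrix n n ℂ} (hM : M.PosSemidef) {r : ℝ} (hr : 0 ≤ r) :
    (r • M).PosSemidef := by
  have hsa : IsSelfAdjoint M := hM.isHermitian
  rw [← cfc_smul_id (R := ℝ) r M]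
  exact cfc_posSemidef hM.isHermitian _ fun i =>
    mul_nonneg hr (hM.eigenvalues_nonneg i)

lemma pd_smul {M : Matrix n n ℂ} (hM : M.PosDef) {r : ℝ} (hr : 0 < r) :
    (r • M).PosDef := by
  refine Matrix.posDef_iff_dotProduct_mulVec.mpr
    ⟨(psd_smul hM.posSemidef hr.le).isHermitian, fun v hv => ?_⟩
  have h1 : star v ⬝ᵥ (r • M) *ᵥ v = (r : ℂ) * (star v ⬝ᵥ M *ᵥ v) := by
    rw [Matrix.smul_mulVec, dotProduct_smul]
    rw [Complex.real_smul]
  rw [h1]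
  exact mul_pos (Complex.zero_lt_real.mpr hr) (hM.dotProduct_mulVec_pos hv)

end
end Helpers19

/-- `Tr(ρ (log σ₂ - log σ₁)) ≤ log(1 + δ / λ_min(σ₁))`. -/
theorem trace_log_diff_le {n : Type*} [Fintype n] [DecidableEq n] [Nonempty n]
    (σ₁ σ₂ ρ : Matrix n n ℂ)
    (h1 : IsDensity σ₁) (h2 : IsDensity σ₂) (hρ : IsDensity ρ)
    (hpd1 : σ₁.PosDef) (hpd2 : σ₂.PosDef)
    (δ : ℝ) (hδ : traceNorm (σ₁ - σ₂) / 2 ≤ δ) :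
    ((ρ * (mlog σ₂ - mlog σ₁)).trace).re ≤
      Real.log (1 + δ / (⨅ i, h1.1.isHermitian.eigenvalues i)) := by
  classical
  have hσ₁ : σ₁.IsHermitian := hpd1.isHermitian
  set lam : ℝ := ⨅ i, h1.1.isHermitian.eigenvalues i with hlam
  have hlam_le : ∀ i, lam ≤ h1.1.isHermitian.eigenvalues i := fun i =>
    ciInf_le (Finite.bddBelow_range _) i
  have hlam_pos : 0 < lam := by
    obtain ⟨i, hi⟩ := Finite.exists_min (h1.1.isHermitian.eigenvalues)
    have h0 : (0:ℝ) < h1.1.isHermitian.eigenvalues i := hpd1.eigenvalues_pos i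
    exact lt_of_lt_of_le h0 (le_ciInf hi)
  have hG : (σ₁ - σ₂).IsHermitian := hσ₁.sub hpd2.isHermitian
  have habs : (∑ i, |hG.eigenvalues i|) / 2 ≤ δ := by
    rw [traceNorm, dif_pos hG] at hδ
    exact hδ
  have hδ0 : 0 ≤ δ := le_trans (by positivity) habs
  set c : ℝ := 1 + δ / lam with hc
  have hc1 : (1:ℝ) ≤ c := le_add_of_nonneg_right (div_nonneg hδ0 hlam_pos.le)
  have hc0 : (0:ℝ) < c := lt_of_lt_of_le one_pos hc1
  have hτpd : (c • σ₁).PosDef := pd_smul hpd1 hc0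
  -- trace of the difference is zero
  have htr0 : (σ₁ - σ₂).trace = 0 := by
    rw [Matrix.trace_sub, h1.2, h2.2, sub_self]
  have hsum0 : ∑ i, hG.eigenvalues i = 0 := by
    have := trace_eq_sum_eig hG
    rw [htr0] at this
    exact_mod_cast this.symm
  have heigG : ∀ i, -δ ≤ hG.eigenvalues i := by
    intro i
    have hterm : ∀ j, (0:ℝ) ≤ |hG.eigenvalues j| - hG.eigenvalues j :=
      fun j => sub_nonneg.mpr (le_abs_self _)
    have hle : |hG.eigenvalues i| - hG.eigenvalues i
        ≤ ∑ j, (|hG.eigenvalues j| - hG.eigenvalues j) :=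
      Finset.single_le_sum (fun j _ => hterm j) (Finset.mem_univ i)
    have hsplit : ∑ j, (|hG.eigenvalues j| - hG.eigenvalues j)
        = (∑ j, |hG.eigenvalues j|) - ∑ j, hG.eigenvalues j :=
      Finset.sum_sub_distrib _ _
    have hni : -hG.eigenvalues i ≤ |hG.eigenvalues i| := neg_le_abs _
    linarith
  have hpsd1 : (δ • 1 + (σ₁ - σ₂)).PosSemidef := shift_psd hG δ heigG
  have hpsd2 : (σ₁ - lam • 1).PosSemidef := sub_smul_psd hσ₁ lam hlam_le
  have hpsd3 : ((δ/lam) • (σ₁ - lam • 1)).PosSemidef :=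
    psd_smul hpsd2 (div_nonneg hδ0 hlam_pos.le)
  have hkey : (c • σ₁ - σ₂).PosSemidef := by
    have hδl : (δ / lam) * lam = δ := div_mul_cancel₀ δ hlam_pos.ne'
    have heq : c • σ₁ - σ₂ = (δ/lam) • (σ₁ - lam • 1) + (δ • 1 + (σ₁ - σ₂)) := by
      rw [hc, add_smul, one_smul, smul_sub, smul_smul, hδl]
      abel
    rw [heq]
    exact hpsd3.add hpsd1
  have hlog : (mlog (c • σ₁) - mlog σ₂).PosSemidef := log_monotone hpd2 hτpd hkey
  have hpair : 0 ≤ ((ρ * (mlog (c • σ₁) - mlog σ₂)).trace).re := trace_pair hρ.1 hlog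
  -- mlog of the scaled matrix
  have hlogsmul : mlog (c • σ₁) = Real.log c • 1 + mlog σ₁ := by
    rw [mlog_eq_cfc hτpd.isHermitian, mlog_eq_cfc hσ₁]
    open scoped Matrix.Norms.L2Operator in
    have := CFC.log_smul (r := c) σ₁ (fun x hx => (spectrum_pos hpd1 x hx).ne') hc0.ne' hσ₁.isSelfAdjoint
    simpa [CFC.log, Algebra.algebraMap_eq_smul_one] using this
  have hexpand : mlog σ₂ - mlog σ₁
      = -(mlog (c • σ₁) - mlog σ₂) + Real.log c • (1 : Matrix n n ℂ) := by
    rw [hlogsmul]; abel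
  have htr : ((ρ * (mlog σ₂ - mlog σ₁)).trace).re
      = -((ρ * (mlog (c • σ₁) - mlog σ₂)).trace).re + Real.log c := by
    rw [hexpand, Matrix.mul_add, Matrix.trace_add, Complex.add_re, Matrix.mul_neg,
      Matrix.trace_neg, Complex.neg_re]
    congr 1
    rw [Matrix.mul_smul, Matrix.mul_one, Matrix.trace_smul, hρ.2]
    simp
  rw [htr]
  linarith
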